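/- Generalized Carlitz identity (exponential generating function form): for every a > 0 and 0 ≤ ℓ ≤ a, Σ_{n≥0} (u^n/n!) · A_{a,ℓ,n}(t,q)/(t;q)_{n+1} = Σ_{s≥0} t^s e^{u(a[s+1]_q − ℓ)}, as an identity of formal power series in u and t. -/

import Mathlib

open Finset Polynomial
open scoped Classical

/-- An element of the wreath product `C_a ≀ S_n`, viewed as a colored permutation:
the window is `[σ(1),…,σ(n)]` where `|σ(i)| = π(i)` (1-based) and the color of the
letter in position `i` is `c(i)`, i.e. `σ(i) = α^{c(i)} |σ(i)|`. -/
abbrev ColPerm (a n : ℕ) := Equiv.Perm (Fin n) × (Fin n → Fin a)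

/-- A rank function realizing (a canonical choice of) the linear order `<_L` of
Regev–Roichman on the letters `α^t j` (encoded as the pair `(t, j)` with `1 ≤ j`)
together with `0` (encoded as `(t, 0)`): letters with color in `L` are negative,
ordered with larger absolute value smaller; letters with color not in `L` are
positive, ordered with larger absolute value larger; `x <_L y ↔ rkL L x < rkL L y`. -/
def rkL {a : ℕ} (L : Finset (Fin a)) (x : Fin a × ℕ) : ℤ :=
  if x.2 = 0 then 0
  else if x.1 ∈ L then -((x.2 : ℤ) * a + (x.1 : ℤ)) else (x.2 : ℤ) * a + (x.1 : ℤ)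

/-- The letter `σ(i)` (as a color/absolute-value pair) in position `i` (1-based) of
the window of `σ`; positions outside `{1,…,n}` give the letter `0`. -/
def wval {a n : ℕ} [NeZero a] (σ : ColPerm a n) (i : ℕ) : Fin a × ℕ :=
  if h : 1 ≤ i ∧ i ≤ n then (σ.2 ⟨i - 1, by omega⟩, (σ.1 ⟨i - 1, by omega⟩ : ℕ) + 1)
  else (0, 0)

/-- The `L`-descent set `Des_L(σ) = {0 ≤ i ≤ n-1 : σ(i) >_L σ(i+1)}`, with `σ(0) := 0`. -/
def DesL {a n : ℕ} [NeZero a] (L : Finset (Fin a)) (σ : ColPerm a n) : Finset ℕ :=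
  (Finset.range n).filter (fun i => rkL L (wval σ (i + 1)) < rkL L (wval σ i))

/-- The `L`-descent number `des_L(σ) = |Des_L(σ)|`. -/
def desL {a n : ℕ} [NeZero a] (L : Finset (Fin a)) (σ : ColPerm a n) : ℕ := (DesL L σ).card

/-- The `L`-reverse major index `rmaj_{L,n}(σ) = Σ_{i ∈ Des_L(σ)} (n - i)`. -/
def rmajL {a n : ℕ} [NeZero a] (L : Finset (Fin a)) (σ : ColPerm a n) : ℕ :=
  ∑ i ∈ DesL L σ, (n - i)

/-- The two-variable generating polynomial
`A_{a,L,n}(t,q) = Σ_{σ ∈ C_a≀S_n} t^{des_L σ} q^{rmaj_{L,n} σ}`, with `t` the outer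
variable and `q` the inner variable. -/
noncomputable def Amaj (a n : ℕ) [NeZero a] (L : Finset (Fin a)) :
    Polynomial (Polynomial ℚ) :=
  ∑ σ : ColPerm a n, Polynomial.C ((X : Polynomial ℚ) ^ rmajL L σ) * X ^ desL L σ

set_option linter.unusedSectionVars false
set_option maxHeartbeats 1000000 in
section
namespace Carlitz

variable {a n : ℕ} [NeZero a] (L : Finset (Fin a))

lemma ha_pos : 0 < a := Nat.pos_of_ne_zero (NeZero.ne a)

lemma rkL_letter_neg_iff (c : Fin a) (k : ℕ) : rkL L (c, k + 1) < 0 ↔ c ∈ L := by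
  have hc : (c : ℤ) < a := by exact_mod_cast c.isLt
  have hc0 : (0:ℤ) ≤ (c:ℤ) := Int.ofNat_nonneg _
  have hda : (1:ℤ) ≤ a := by exact_mod_cast (ha_pos (a := a))
  unfold rkL
  simp only [show (k+1 : ℕ) ≠ 0 by omega, if_false]
  split
  · simp only [iff_true, ‹c ∈ L›]
    have : (0:ℤ) < ((k:ℤ)+1) * a + c := by positivity
    push_cast
    omega
  · simp only [iff_false, ‹¬ c ∈ L›, not_lt]
    positivity

lemma rkL_letter_nonneg_iff (c : Fin a) (k : ℕ) : 0 ≤ rkL L (c, k + 1) ↔ c ∉ L := by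
  rw [← not_lt, not_iff_not, rkL_letter_neg_iff]

lemma rkL_letter_bound (c : Fin a) (k : ℕ) (hk : k < n) :
    -(((n:ℤ) + 1) * a) < rkL L (c, k + 1) ∧ rkL L (c, k + 1) < ((n:ℤ) + 1) * a := by
  have hc : (c : ℤ) < a := by exact_mod_cast c.isLt
  have hc0 : (0:ℤ) ≤ (c:ℤ) := Int.ofNat_nonneg _
  have hkn : (k:ℤ) < n := by exact_mod_cast hk
  unfold rkL
  simp only [show (k+1 : ℕ) ≠ 0 by omega, if_false]
  have h1 : ((k:ℤ)+1) * a + c < ((n:ℤ)+1) * a := by nlinarith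
  have h0 : (0:ℤ) ≤ ((k:ℤ)+1) * a + c := by positivity
  split <;> push_cast <;> constructor <;> omega

lemma rkL_letter_inj {c c' : Fin a} {k k' : ℕ}
    (h : rkL L (c, k + 1) = rkL L (c', k' + 1)) : k = k' := by
  have hc : (c : ℤ) < a := by exact_mod_cast c.isLt
  have hc' : (c' : ℤ) < a := by exact_mod_cast c'.isLt
  have hc0 : (0:ℤ) ≤ (c:ℤ) := Int.ofNat_nonneg _
  have hc0' : (0:ℤ) ≤ (c':ℤ) := Int.ofNat_nonneg _
  have hda : (1:ℤ) ≤ a := by exact_mod_cast (ha_pos (a := a))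
  unfold rkL at h
  simp only [show (k+1 : ℕ) ≠ 0 by omega, show (k'+1 : ℕ) ≠ 0 by omega, if_false] at h
  have e1 : ((k:ℤ)+1) * a = (k:ℤ)*a + a := by ring
  have e2 : ((k':ℤ)+1) * a = (k':ℤ)*a + a := by ring
  have hk0 : (0:ℤ) ≤ (k:ℤ) := Int.ofNat_nonneg _
  have hk0' : (0:ℤ) ≤ (k':ℤ) := Int.ofNat_nonneg _
  have hmain : (k:ℤ) = k' → k = k' := by exact_mod_cast fun h => h
  apply hmain
  split at h <;> split at h <;> push_cast at h <;> nlinarith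

lemma wval_pos (σ : ColPerm a n) (p : Fin n) :
    wval σ ((p : ℕ) + 1) = (σ.2 p, (σ.1 p : ℕ) + 1) := by
  have hp : 1 ≤ (p:ℕ) + 1 ∧ (p:ℕ) + 1 ≤ n := ⟨by omega, by omega⟩
  rw [wval, dif_pos hp]
  simp

lemma wval_zero (σ : ColPerm a n) : wval σ 0 = (0, 0) := by
  rw [wval, dif_neg]; omega

lemma rkL_zero : rkL L (0, 0) = 0 := by rw [rkL]; simp

lemma mem_DesL {σ : ColPerm a n} {i : ℕ} :
    i ∈ DesL L σ ↔ i < n ∧ rkL L (wval σ (i + 1)) < rkL L (wval σ i) := by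
  simp [DesL]

/-- cumulative descent count: number of descents `≤ p`. -/
def dd (σ : ColPerm a n) (p : ℕ) : ℕ := ((DesL L σ).filter (· ≤ p)).card

/-- cumulative part-sum: `e p = l n + l (n-1) + ⋯ + l (n-p)`. -/
def ee (n : ℕ) (l : ℕ → ℕ) (p : ℕ) : ℕ := ∑ i ∈ Finset.range (p + 1), l (n - i)

lemma dd_le_desL (σ : ColPerm a n) (p : ℕ) : dd L σ p ≤ desL L σ :=
  Finset.card_filter_le _ _

lemma dd_succ (σ : ColPerm a n) (p : ℕ) :
    dd L σ (p + 1) = dd L σ p + (if p + 1 ∈ DesL L σ then 1 else 0) := by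
  unfold dd
  have h1 : (DesL L σ).filter (· ≤ p + 1) =
      (DesL L σ).filter (· ≤ p) ∪ (DesL L σ).filter (· = p + 1) := by
    rw [← Finset.filter_or]
    exact Finset.filter_congr fun x _ => by constructor <;> intro h <;> omega
  rw [h1, Finset.card_union_of_disjoint]
  · congr 1
    rw [Finset.filter_eq']
    split <;> simp
  · rw [Finset.disjoint_left]
    intro x hx hx'
    simp only [Finset.mem_filter] at hx hx'
    omega

lemma dd_zero (σ : ColPerm a n) :
    dd L σ 0 = if 0 ∈ DesL L σ then 1 else 0 := by
  unfold dd
  have : (DesL L σ).filter (· ≤ 0) = (DesL L σ).filter (· = 0) :=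
    Finset.filter_congr fun x _ => by constructor <;> intro h <;> omega
  rw [this, Finset.filter_eq']
  split <;> simp

lemma dd_eq_desL (σ : ColPerm a n) (p : ℕ) (hp : n ≤ p + 1) : dd L σ p = desL L σ := by
  unfold dd desL
  congr 1
  apply Finset.filter_true_of_mem
  intro i hi
  have := (mem_DesL L).1 hi
  omega

lemma sum_dd (σ : ColPerm a n) :
    ∑ p ∈ Finset.range n, dd L σ p = rmajL L σ := by
  unfold dd rmajL
  simp only [Finset.card_filter]
  rw [Finset.sum_comm]
  refine Finset.sum_congr rfl fun i hi => ?_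
  have hin : i < n := ((mem_DesL L).1 hi).1
  rw [← Finset.card_filter]
  have : (Finset.range n).filter (fun p => i ≤ p) = Finset.Ico i n := by
    ext x; simp [Finset.mem_Ico]; omega
  rw [this, Nat.card_Ico]

lemma ee_succ (l : ℕ → ℕ) (p : ℕ) : ee n l (p + 1) = ee n l p + l (n - (p + 1)) := by
  unfold ee; rw [Finset.sum_range_succ]

lemma ee_zero (l : ℕ → ℕ) : ee n l 0 = l n := by unfold ee; simp



/-- If there is no descent at any index `< m`, the rank at window position `m` is `≥ 0`. -/
lemma rk_nonneg_of_no_descent (σ : ColPerm a n) (m : ℕ) (hm : m ≤ n)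
    (h : ∀ i < m, i ∉ DesL L σ) : 0 ≤ rkL L (wval σ m) := by
  induction m with
  | zero => rw [wval_zero, rkL_zero]
  | succ m ih =>
    have hm' : m ≤ n := by omega
    have h' : ∀ i < m, i ∉ DesL L σ := fun i hi => h i (by omega)
    have ih' := ih hm' h'
    have hnd := h m (by omega)
    rw [mem_DesL] at hnd
    push_neg at hnd
    exact le_trans ih' (hnd (by omega))

/-- If the color in window position `p` (0-based) lies in `L`, there is a descent `≤ p`. -/
lemma one_le_dd_of_mem (σ : ColPerm a n) (p : Fin n) (hc : σ.2 p ∈ L) :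
    1 ≤ dd L σ (p : ℕ) := by
  by_contra hdd
  have h0 : dd L σ (p:ℕ) = 0 := by omega
  unfold dd at h0
  rw [Finset.card_eq_zero, Finset.filter_eq_empty_iff] at h0
  have hno : ∀ i < (p:ℕ) + 1, i ∉ DesL L σ := by
    intro i hi hmem
    exact h0 hmem (by omega : i ≤ (p:ℕ))
  have := rk_nonneg_of_no_descent L σ ((p:ℕ) + 1) (by omega) hno
  rw [wval_pos] at this
  rw [← rkL_letter_neg_iff L (σ.2 p) (σ.1 p)] at hc
  omega

/-- double-counting: `Σ_{p<N} Σ_{i≤p} g i = Σ_{i<N} (N-i) * g i`. -/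
lemma sum_triangle (g : ℕ → ℕ) (N : ℕ) :
    ∑ p ∈ Finset.range N, ∑ i ∈ Finset.range (p + 1), g i =
      ∑ i ∈ Finset.range N, (N - i) * g i := by
  induction N with
  | zero => simp
  | succ N ih =>
    rw [Finset.sum_range_succ, ih, Finset.sum_range_succ, Finset.sum_range_succ]
    have h1 : ∑ i ∈ Finset.range N, (N + 1 - i) * g i =
        ∑ i ∈ Finset.range N, ((N - i) * g i + g i) := by
      refine Finset.sum_congr rfl fun i hi => ?_
      rw [Finset.mem_range] at hi
      have : N + 1 - i = (N - i) + 1 := by omega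
      rw [this]; ring
    rw [h1, Finset.sum_add_distrib]
    simp; ring

lemma sum_ee (l : ℕ → ℕ) :
    ∑ p ∈ Finset.range n, ee n l p = ∑ j ∈ Finset.range (n + 1), j * l j := by
  unfold ee
  rw [sum_triangle]
  have h1 : ∑ i ∈ Finset.range n, (n - i) * l (n - i) =
      ∑ i ∈ Finset.range n, (i + 1) * l (i + 1) := by
    rw [← Finset.sum_range_reflect]
    refine Finset.sum_congr rfl fun i hi => ?_
    rw [Finset.mem_range] at hi
    have : n - (n - 1 - i) = i + 1 := by omega
    rw [this]
  rw [h1, Finset.sum_range_succ']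
  simp

lemma ee_le_sum (l : ℕ → ℕ) (p : ℕ) (hp : p < n) :
    ee n l p ≤ ∑ j ∈ Finset.range (n + 1), l j := by
  unfold ee
  have hinj : ∀ x ∈ Finset.range (p+1), ∀ y ∈ Finset.range (p+1),
      n - x = n - y → x = y := by
    intro x hx y hy h
    rw [Finset.mem_range] at hx hy
    omega
  rw [← Finset.sum_image hinj]
  apply Finset.sum_le_sum_of_subset
  intro j hj
  simp only [Finset.mem_image, Finset.mem_range] at hj ⊢
  obtain ⟨i, hi, rfl⟩ := hj
  omega

/-- last-block sum: `ee l (n-1) = (Σ_{j≤n} l j) - l 0` (for `n ≥ 1`). -/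
lemma ee_last (l : ℕ → ℕ) (hn : 1 ≤ n) :
    l 0 + ee n l (n - 1) = ∑ j ∈ Finset.range (n + 1), l j := by
  unfold ee
  have hidx : n - 1 + 1 = n := by omega
  rw [hidx, Finset.sum_range_succ']
  have : ∑ i ∈ Finset.range n, l (n - i) = ∑ i ∈ Finset.range n, l (i + 1) := by
    rw [← Finset.sum_range_reflect]
    refine Finset.sum_congr rfl fun i hi => ?_
    rw [Finset.mem_range] at hi
    congr 1; omega
  rw [this]; omega


/-! ### The allowed letters and the sorting construction -/

def AllowedSet (a : ℕ) (L : Finset (Fin a)) (s : ℕ) : Finset (Fin a × ℕ) :=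
  ((Finset.univ : Finset (Fin a)) ×ˢ Finset.range (s + 1)).filter
    fun x => ¬(x.1 ∈ L ∧ x.2 = 0)

lemma mem_AllowedSet {s : ℕ} {x : Fin a × ℕ} :
    x ∈ AllowedSet a L s ↔ x.2 ≤ s ∧ (x.1 ∈ L → x.2 ≠ 0) := by
  simp only [AllowedSet, Finset.mem_filter, Finset.mem_product, Finset.mem_univ,
    Finset.mem_range, true_and]
  constructor
  · rintro ⟨h1, h2⟩; exact ⟨by omega, fun hL h0 => h2 ⟨hL, h0⟩⟩
  · rintro ⟨h1, h2⟩; exact ⟨by omega, fun ⟨hL, h0⟩ => h2 hL h0⟩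

/-- The sorting key. -/
def Kf (L : Finset (Fin a)) (f : Fin n → Fin a × ℕ) : Fin n → ℤ :=
  fun k => ((f k).2 : ℤ) * (2 * ((n : ℤ) + 1) * (a : ℤ)) + rkL L ((f k).1, (k : ℕ) + 1)

lemma Kf_le_arith {g g' r r' : ℤ} (B : ℤ)
    (h : g * (2 * B) + r ≤ g' * (2 * B) + r')
    (hr : -B < r ∧ r < B) (hr' : -B < r' ∧ r' < B) : g ≤ g' := by
  by_contra hgg
  push_neg at hgg
  have h1 : g' + 1 ≤ g := hgg
  have hB : 0 < B := by
    rcases hr with ⟨h2, h3⟩; omega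
  have h2 : (g' + 1) * (2 * B) ≤ g * (2 * B) := by
    apply mul_le_mul_of_nonneg_right h1; omega
  nlinarith

lemma Kf_inj (f : Fin n → Fin a × ℕ) : Function.Injective (Kf L f) := by
  intro k k' h
  unfold Kf at h
  set B : ℤ := ((n : ℤ) + 1) * (a : ℤ) with hB
  have hbnd := rkL_letter_bound L (f k).1 (k : ℕ) k.isLt
  have hbnd' := rkL_letter_bound L (f k').1 (k' : ℕ) k'.isLt
  have harr : ((f k).2 : ℤ) * (2 * B) + rkL L ((f k).1, (k : ℕ) + 1) =
      ((f k').2 : ℤ) * (2 * B) + rkL L ((f k').1, (k' : ℕ) + 1) := by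
    rw [hB]; linear_combination h
  have h1 : ((f k).2 : ℤ) ≤ (f k').2 :=
    Kf_le_arith B harr.le ⟨hbnd.1, hbnd.2⟩ ⟨hbnd'.1, hbnd'.2⟩
  have h2 : ((f k').2 : ℤ) ≤ (f k).2 :=
    Kf_le_arith B harr.ge ⟨hbnd'.1, hbnd'.2⟩ ⟨hbnd.1, hbnd.2⟩
  have hgg : ((f k).2 : ℤ) = (f k').2 := le_antisymm h1 h2
  have hrr : rkL L ((f k).1, (k : ℕ) + 1) = rkL L ((f k').1, (k' : ℕ) + 1) := by
    rw [hgg] at harr; omega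
  exact Fin.ext (rkL_letter_inj L hrr)

/-- The sorted colored permutation associated to a tuple of letters. -/
noncomputable def sigmaOf (L : Finset (Fin a)) (f : Fin n → Fin a × ℕ) : ColPerm a n :=
  (Tuple.sort (Kf L f), fun p => (f (Tuple.sort (Kf L f) p)).1)

/-- heights in sorted order (ℕ-indexed, 0 outside range) -/
noncomputable def hOf (L : Finset (Fin a)) (f : Fin n → Fin a × ℕ) (p : ℕ) : ℕ :=
  if hp : p < n then (f (Tuple.sort (Kf L f) ⟨p, hp⟩)).2 else 0

/-- ranks in sorted order -/
noncomputable def rkp (L : Finset (Fin a)) (f : Fin n → Fin a × ℕ) (p : ℕ) : ℤ :=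
  if hp : p < n then
    rkL L ((f (Tuple.sort (Kf L f) ⟨p, hp⟩)).1, ((Tuple.sort (Kf L f) ⟨p, hp⟩ : ℕ) + 1))
  else 0

lemma hOf_rkp_step (f : Fin n → Fin a × ℕ) (p : ℕ) (hp : p + 1 < n) :
    hOf L f p ≤ hOf L f (p + 1) ∧
      (hOf L f p = hOf L f (p + 1) → rkp L f p < rkp L f (p + 1)) := by
  have hp0 : p < n := by omega
  have hmono := Tuple.monotone_sort (Kf L f)
    (a := ⟨p, hp0⟩) (b := ⟨p + 1, hp⟩) (by simp [Fin.mk_le_mk])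
  simp only [Function.comp_apply, Kf] at hmono
  set k := Tuple.sort (Kf L f) ⟨p, hp0⟩ with hk
  set k' := Tuple.sort (Kf L f) ⟨p + 1, hp⟩ with hk'
  have hkk : k ≠ k' := by
    intro hkE
    have := (Tuple.sort (Kf L f)).injective hkE
    simp at this
  set B : ℤ := ((n : ℤ) + 1) * (a : ℤ) with hB
  have hbnd := rkL_letter_bound L (f k).1 (k : ℕ) k.isLt
  have hbnd' := rkL_letter_bound L (f k').1 (k' : ℕ) k'.isLt
  have harr : ((f k).2 : ℤ) * (2 * B) + rkL L ((f k).1, (k : ℕ) + 1) ≤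
      ((f k').2 : ℤ) * (2 * B) + rkL L ((f k').1, (k' : ℕ) + 1) := by
    calc ((f k).2 : ℤ) * (2 * B) + rkL L ((f k).1, (k : ℕ) + 1)
        = ((f k).2 : ℤ) * (2 * ((n:ℤ)+1) * (a:ℤ)) + rkL L ((f k).1, (k : ℕ) + 1) := by rw [hB]; ring
      _ ≤ ((f k').2 : ℤ) * (2 * ((n:ℤ)+1) * (a:ℤ)) + rkL L ((f k').1, (k' : ℕ) + 1) := hmono
      _ = ((f k').2 : ℤ) * (2 * B) + rkL L ((f k').1, (k' : ℕ) + 1) := by rw [hB]; ring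
  have h1 : ((f k).2 : ℤ) ≤ (f k').2 :=
    Kf_le_arith B harr ⟨hbnd.1, hbnd.2⟩ ⟨hbnd'.1, hbnd'.2⟩
  constructor
  · have : hOf L f p = (f k).2 := by rw [hOf, dif_pos hp0]
    have h2 : hOf L f (p+1) = (f k').2 := by rw [hOf, dif_pos hp]
    rw [this, h2]
    exact_mod_cast h1
  · intro hEq
    have e1 : hOf L f p = (f k).2 := by rw [hOf, dif_pos hp0]
    have e2 : hOf L f (p+1) = (f k').2 := by rw [hOf, dif_pos hp]
    rw [e1, e2] at hEq
    have e3 : rkp L f p = rkL L ((f k).1, (k : ℕ) + 1) := by rw [rkp, dif_pos hp0]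
    have e4 : rkp L f (p+1) = rkL L ((f k').1, (k' : ℕ) + 1) := by rw [rkp, dif_pos hp]
    rw [e3, e4]
    have hle : rkL L ((f k).1, (k : ℕ) + 1) ≤ rkL L ((f k').1, (k' : ℕ) + 1) := by
      have : ((f k).2 : ℤ) = (f k').2 := by exact_mod_cast hEq
      rw [this] at harr
      omega
    rcases lt_or_eq_of_le hle with h | h
    · exact h
    · exact absurd (Fin.ext (rkL_letter_inj L h)) hkk

lemma wval_sigmaOf (f : Fin n → Fin a × ℕ) (p : ℕ) (hp : p < n) :
    wval (sigmaOf L f) (p + 1) =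
      ((f (Tuple.sort (Kf L f) ⟨p, hp⟩)).1, ((Tuple.sort (Kf L f) ⟨p, hp⟩ : ℕ) + 1)) := by
  have := wval_pos (sigmaOf L f) ⟨p, hp⟩
  simpa [sigmaOf] using this

lemma rk_wval_sigmaOf (f : Fin n → Fin a × ℕ) (p : ℕ) (hp : p < n) :
    rkL L (wval (sigmaOf L f) (p + 1)) = rkp L f p := by
  rw [wval_sigmaOf L f p hp, rkp, dif_pos hp]

lemma desChar_succ (f : Fin n → Fin a × ℕ) (p : ℕ) (hp : p + 1 < n) :
    (p + 1) ∈ DesL L (sigmaOf L f) ↔ rkp L f (p + 1) < rkp L f p := by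
  rw [mem_DesL]
  rw [rk_wval_sigmaOf L f (p + 1) hp, rk_wval_sigmaOf L f p (by omega)]
  constructor
  · rintro ⟨_, h⟩; exact h
  · intro h; exact ⟨hp, h⟩

lemma desChar_zero (f : Fin n → Fin a × ℕ) (hn : 0 < n) :
    0 ∈ DesL L (sigmaOf L f) ↔ (f (Tuple.sort (Kf L f) ⟨0, hn⟩)).1 ∈ L := by
  rw [mem_DesL, wval_zero, rkL_zero]
  rw [show (0 + 1 : ℕ) = 0 + 1 from rfl, rk_wval_sigmaOf L f 0 hn, rkp, dif_pos hn]
  rw [rkL_letter_neg_iff]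
  constructor
  · rintro ⟨_, h⟩; exact h
  · intro h; exact ⟨hn, h⟩


/-! ### The invariant: heights dominate cumulative descents -/

noncomputable def Ef (L : Finset (Fin a)) (f : Fin n → Fin a × ℕ) (p : ℕ) : ℕ :=
  hOf L f p - dd L (sigmaOf L f) p

lemma DesL_empty_of_n0 (σ : ColPerm a n) (hn : n = 0) : DesL L σ = ∅ := by
  subst hn
  simp [DesL]

lemma dd_hOf_invariant (f : Fin n → Fin a × ℕ)
    (hall : ∀ k, (f k).1 ∈ L → (f k).2 ≠ 0) :
    ∀ p, p < n → dd L (sigmaOf L f) p ≤ hOf L f p ∧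
      (∀ q ≤ p, Ef L f q ≤ Ef L f p) := by
  intro p
  induction p with
  | zero =>
    intro hp
    refine ⟨?_, fun q hq => by have : q = 0 := by omega
                               rw [this]⟩
    rw [dd_zero]
    split
    · rename_i hdes
      rw [desChar_zero L f hp] at hdes
      have := hall _ hdes
      rw [hOf, dif_pos hp]
      omega
    · omega
  | succ p ih =>
    intro hp
    have hp0 : p < n := by omega
    obtain ⟨ih1, ih2⟩ := ih hp0
    have hstep := hOf_rkp_step L f p hp
    rw [dd_succ]
    have hmain : dd L (sigmaOf L f) p + (if p + 1 ∈ DesL L (sigmaOf L f) then 1 else 0)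
        ≤ hOf L f (p + 1) ∧ Ef L f p ≤ Ef L f (p + 1) := by
      split
      · rename_i hdes
        have hdesD := hdes
        rw [desChar_succ L f p hp] at hdes
        have hne : hOf L f p ≠ hOf L f (p + 1) := by
          intro hEq
          have := hstep.2 hEq
          omega
        have hlt : hOf L f p + 1 ≤ hOf L f (p + 1) := by
          have := hstep.1; omega
        constructor
        · omega
        · unfold Ef
          rw [dd_succ, if_pos hdesD]
          omega
      · constructor
        · have := hstep.1; omega
        · unfold Ef
          rw [dd_succ, if_neg ‹¬ p + 1 ∈ DesL L (sigmaOf L f)›]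
          have := hstep.1
          omega
    refine ⟨hmain.1, fun q hq => ?_⟩
    rcases Nat.lt_or_ge q (p + 1) with h | h
    · exact le_trans (ih2 q (by omega)) hmain.2
    · have : q = p + 1 := by omega
      rw [this]

lemma Ef_zero_of_n0 (f : Fin n → Fin a × ℕ) (hn : n = 0) (p : ℕ) : Ef L f p = 0 := by
  unfold Ef hOf
  rw [dif_neg (by omega)]
  omega

noncomputable def EpadOf (L : Finset (Fin a)) (f : Fin n → Fin a × ℕ) (m : ℕ) : ℕ :=
  if m = 0 then 0 else Ef L f (min (m - 1) (n - 1))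

lemma EpadOf_mono (f : Fin n → Fin a × ℕ)
    (hall : ∀ k, (f k).1 ∈ L → (f k).2 ≠ 0) : Monotone (EpadOf L f) := by
  intro m m' hmm'
  unfold EpadOf
  rcases Nat.eq_zero_or_pos m with hm | hm
  · subst hm; rw [if_pos rfl]; exact Nat.zero_le _
  · rw [if_neg (by omega), if_neg (by omega)]
    rcases Nat.eq_zero_or_pos n with hn | hn
    · rw [Ef_zero_of_n0 L f hn, Ef_zero_of_n0 L f hn]
    · exact (dd_hOf_invariant L f hall (min (m' - 1) (n - 1)) (by omega)).2
        (min (m - 1) (n - 1)) (by omega)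

lemma EpadOf_eq (f : Fin n → Fin a × ℕ) (m : ℕ) (h1 : 1 ≤ m) (h2 : m ≤ n) :
    EpadOf L f m = Ef L f (m - 1) := by
  unfold EpadOf
  rw [if_neg (by omega)]
  congr 1
  omega

noncomputable def valsOf (L : Finset (Fin a)) (s : ℕ) (f : Fin n → Fin a × ℕ) (j : ℕ) : ℕ :=
  if j = 0 then s - hOf L f (n - 1)
  else if j ≤ n then EpadOf L f (n - j + 1) - EpadOf L f (n - j) else 0

noncomputable def lOf (L : Finset (Fin a)) (s : ℕ) (f : Fin n → Fin a × ℕ) : ℕ →₀ ℕ :=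
  Finsupp.onFinset (Finset.range (n + 1)) (valsOf L s f) (by
    intro j hj
    rw [Finset.mem_range]
    by_contra hn
    exact hj (by unfold valsOf; rw [if_neg (by omega), if_neg (by omega)]))

lemma lOf_apply (s : ℕ) (f : Fin n → Fin a × ℕ) (j : ℕ) :
    lOf L s f j = valsOf L s f j := Finsupp.onFinset_apply

/-- the heights recovered from `lOf` -/
lemma ee_lOf (s : ℕ) (f : Fin n → Fin a × ℕ)
    (hall : ∀ k, (f k).1 ∈ L → (f k).2 ≠ 0) (p : ℕ) (hp : p < n) :
    ee n (lOf L s f) p = Ef L f p := by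
  unfold ee
  have hcong : ∀ i ∈ Finset.range (p + 1),
      lOf L s f (n - i) = EpadOf L f (i + 1) - EpadOf L f i := by
    intro i hi
    rw [Finset.mem_range] at hi
    rw [lOf_apply, valsOf, if_neg (by omega), if_pos (by omega)]
    congr 2 <;> omega
  rw [Finset.sum_congr rfl hcong, Finset.sum_range_tsub (EpadOf_mono L f hall)]
  rw [EpadOf_eq L f (p + 1) (by omega) (by omega)]
  simp [EpadOf]

lemma sum_lOf (s : ℕ) (f : Fin n → Fin a × ℕ)
    (hall : ∀ k, (f k).1 ∈ L → (f k).2 ≠ 0)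
    (hle : hOf L f (n - 1) ≤ s) :
    ∑ j ∈ Finset.range (n + 1), lOf L s f j = s - desL L (sigmaOf L f) := by
  rw [Finset.sum_range_succ']
  have h1 : ∀ i ∈ Finset.range n, lOf L s f (i + 1) =
      EpadOf L f (n - i) - EpadOf L f (n - i - 1) := by
    intro i hi
    rw [Finset.mem_range] at hi
    rw [lOf_apply, valsOf, if_neg (by omega), if_pos (by omega)]
    congr 2 <;> omega
  rw [Finset.sum_congr rfl h1, ← Finset.sum_range_reflect]
  have h2 : ∀ i ∈ Finset.range n,
      EpadOf L f (n - (n - 1 - i)) - EpadOf L f (n - (n - 1 - i) - 1) =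
        EpadOf L f (i + 1) - EpadOf L f i := by
    intro i hi
    rw [Finset.mem_range] at hi
    congr 2 <;> omega
  rw [Finset.sum_congr rfl h2, Finset.sum_range_tsub (EpadOf_mono L f hall)]
  rw [lOf_apply, valsOf, if_pos rfl]
  have h0 : EpadOf L f 0 = 0 := by unfold EpadOf; rw [if_pos rfl]
  rcases Nat.eq_zero_or_pos n with hn | hn
  · have hdes : desL L (sigmaOf L f) = 0 := by
      unfold desL; rw [DesL_empty_of_n0 L _ hn]; simp
    have hh : hOf L f (n - 1) = 0 := by
      unfold hOf; rw [dif_neg (by omega)]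
    have hE : EpadOf L f n = 0 := by unfold EpadOf; rw [if_pos hn]
    omega
  · have hE : EpadOf L f n = Ef L f (n - 1) := EpadOf_eq L f n hn le_rfl
    have hdes : desL L (sigmaOf L f) = dd L (sigmaOf L f) (n - 1) :=
      (dd_eq_desL L _ (n - 1) (by omega)).symm
    have hinv := (dd_hOf_invariant L f hall (n - 1) (by omega)).1
    have hEf : Ef L f (n - 1) = hOf L f (n - 1) - dd L (sigmaOf L f) (n - 1) := rfl
    omega


/-! ### The bijection -/

noncomputable def Phi (L : Finset (Fin a)) (x : Σ _ : ColPerm a n, ℕ →₀ ℕ) :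
    Fin n → Fin a × ℕ :=
  fun k => (x.1.2 (x.1.1.symm k),
    dd L x.1 ((x.1.1.symm k : Fin n) : ℕ) + ee n x.2 ((x.1.1.symm k : Fin n) : ℕ))

noncomputable def Psi (L : Finset (Fin a)) (s : ℕ) (f : Fin n → Fin a × ℕ) :
    Σ _ : ColPerm a n, ℕ →₀ ℕ :=
  ⟨sigmaOf L f, lOf L s f⟩

noncomputable def D1 (a n : ℕ) [NeZero a] (L : Finset (Fin a)) (s : ℕ) :
    Finset (Σ _ : ColPerm a n, ℕ →₀ ℕ) :=
  ((Finset.univ : Finset (ColPerm a n)).filter fun σ => desL L σ ≤ s).sigma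
    fun σ => Finset.finsuppAntidiag (Finset.range (n + 1)) (s - desL L σ)

noncomputable def D2 (a n : ℕ) [NeZero a] (L : Finset (Fin a)) (s : ℕ) :
    Finset (Fin n → Fin a × ℕ) :=
  Fintype.piFinset fun _ : Fin n => AllowedSet a L s

lemma mem_D1 {s : ℕ} {x : Σ _ : ColPerm a n, ℕ →₀ ℕ} :
    x ∈ D1 a n L s ↔ desL L x.1 ≤ s ∧
      (∑ j ∈ Finset.range (n + 1), x.2 j) = s - desL L x.1 ∧
      x.2.support ⊆ Finset.range (n + 1) := by
  unfold D1
  rw [Finset.mem_sigma, Finset.mem_filter, Finset.mem_finsuppAntidiag]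
  constructor
  · rintro ⟨⟨_, h1⟩, h2, h3⟩; exact ⟨h1, h2, h3⟩
  · rintro ⟨h1, h2, h3⟩; exact ⟨⟨Finset.mem_univ _, h1⟩, h2, h3⟩

lemma mem_D2 {s : ℕ} {f : Fin n → Fin a × ℕ} :
    f ∈ D2 a n L s ↔ ∀ k, (f k).2 ≤ s ∧ ((f k).1 ∈ L → (f k).2 ≠ 0) := by
  unfold D2
  rw [Fintype.mem_piFinset]
  exact forall_congr' fun k => mem_AllowedSet L

lemma Phi_mem {s : ℕ} {x : Σ _ : ColPerm a n, ℕ →₀ ℕ} (hx : x ∈ D1 a n L s) :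
    Phi L x ∈ D2 a n L s := by
  obtain ⟨h1, h2, h3⟩ := mem_D1 L |>.1 hx
  rw [mem_D2]
  intro k
  constructor
  · have hd : dd L x.1 ((x.1.1.symm k : Fin n) : ℕ) ≤ desL L x.1 := dd_le_desL L _ _
    have he : ee n x.2 ((x.1.1.symm k : Fin n) : ℕ) ≤ ∑ j ∈ Finset.range (n + 1), x.2 j :=
      ee_le_sum (x.2 : ℕ → ℕ) _ (x.1.1.symm k).isLt
    simp only [Phi]
    omega
  · intro hc
    simp only [Phi] at hc ⊢
    have := one_le_dd_of_mem L x.1 (x.1.1.symm k) hc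
    omega

lemma Psi_mem {s : ℕ} {f : Fin n → Fin a × ℕ} (hf : f ∈ D2 a n L s) :
    Psi L s f ∈ D1 a n L s := by
  rw [mem_D2] at hf
  have hall : ∀ k, (f k).1 ∈ L → (f k).2 ≠ 0 := fun k => (hf k).2
  have hhle : hOf L f (n - 1) ≤ s := by
    unfold hOf
    split
    · exact (hf _).1
    · omega
  have hdes : desL L (sigmaOf L f) ≤ s := by
    rcases Nat.eq_zero_or_pos n with hn | hn
    · unfold desL; rw [DesL_empty_of_n0 L _ hn]; simp
    · have h1 := (dd_hOf_invariant L f hall (n - 1) (by omega)).1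
      have h2 := dd_eq_desL L (sigmaOf L f) (n - 1) (by omega)
      omega
  rw [mem_D1]
  refine ⟨hdes, ?_, ?_⟩
  · exact sum_lOf L s f hall hhle
  · intro j hj
    rw [Finsupp.mem_support_iff] at hj
    have hj2 : valsOf L s f j ≠ 0 := by rw [← lOf_apply (L := L) (s := s)]; exact hj
    clear hj; rename' hj2 => hj
    rw [Finset.mem_range]
    by_contra hn2
    exact hj (by unfold valsOf; rw [if_neg (by omega), if_neg (by omega)])

lemma Phi_weight {s : ℕ} {x : Σ _ : ColPerm a n, ℕ →₀ ℕ} (hx : x ∈ D1 a n L s) :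
    rmajL L x.1 + ∑ j ∈ Finset.range (n + 1), j * x.2 j =
      ∑ k : Fin n, (Phi L x k).2 := by
  have h1 : ∑ k : Fin n, (Phi L x k).2 =
      ∑ p : Fin n, (dd L x.1 (p : ℕ) + ee n x.2 (p : ℕ)) := by
    exact Equiv.sum_comp x.1.1.symm
      (fun p => dd L x.1 (p : ℕ) + ee n x.2 (p : ℕ))
  rw [h1, Fin.sum_univ_eq_sum_range (fun p => dd L x.1 p + ee n x.2 p) n]
  rw [Finset.sum_add_distrib, sum_dd, sum_ee]

lemma Phi_Psi {s : ℕ} {f : Fin n → Fin a × ℕ} (hf : f ∈ D2 a n L s) :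
    Phi L (Psi L s f) = f := by
  rw [mem_D2] at hf
  have hall : ∀ k, (f k).1 ∈ L → (f k).2 ≠ 0 := fun k => (hf k).2
  funext k
  have hπp : (sigmaOf L f).1 ((sigmaOf L f).1.symm k) = k := Equiv.apply_symm_apply _ _
  have hfst : (Phi L (Psi L s f) k).1 = (f k).1 := by
    show ((sigmaOf L f).2 ((sigmaOf L f).1.symm k)) = (f k).1
    show (f ((sigmaOf L f).1 ((sigmaOf L f).1.symm k))).1 = (f k).1
    rw [hπp]
  have hsnd : (Phi L (Psi L s f) k).2 = (f k).2 := by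
    show dd L (sigmaOf L f) (((sigmaOf L f).1.symm k : Fin n) : ℕ)
        + ee n (lOf L s f) (((sigmaOf L f).1.symm k : Fin n) : ℕ) = (f k).2
    set p : Fin n := (sigmaOf L f).1.symm k with hpdef
    have hee := ee_lOf L s f hall (p : ℕ) p.isLt
    have hinv := (dd_hOf_invariant L f hall (p : ℕ) p.isLt).1
    have hEf : Ef L f (p : ℕ) = hOf L f (p : ℕ) - dd L (sigmaOf L f) (p : ℕ) := rfl
    have hhof : hOf L f (p : ℕ) = (f k).2 := by
      unfold hOf
      rw [dif_pos p.isLt]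
      have h1 : (⟨(p : ℕ), p.isLt⟩ : Fin n) = p := Fin.eta p p.isLt
      rw [h1]
      show (f ((sigmaOf L f).1 p)).2 = (f k).2
      rw [hpdef, hπp]
    omega
  exact Prod.ext hfst hsnd


lemma Kf_apply (f : Fin n → Fin a × ℕ) (k : Fin n) :
    Kf L f k = ((f k).2 : ℤ) * (2 * ((n : ℤ) + 1) * (a : ℤ)) +
      rkL L ((f k).1, (k : ℕ) + 1) := rfl

lemma Kf_lt_arith {g g' r r' B : ℤ}
    (hr : -B < r ∧ r < B) (hr' : -B < r' ∧ r' < B)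
    (h : g + 1 ≤ g' ∨ (g ≤ g' ∧ r < r')) :
    g * (2 * B) + r < g' * (2 * B) + r' := by
  have hB : 0 < B := by rcases hr with ⟨hh1, hh2⟩; omega
  rcases h with h | ⟨h1, h2⟩
  · have h2 : (g + 1) * (2 * B) ≤ g' * (2 * B) :=
      mul_le_mul_of_nonneg_right h (by omega)
    nlinarith
  · have h2' : g * (2 * B) ≤ g' * (2 * B) :=
      mul_le_mul_of_nonneg_right h1 (by omega)
    omega

lemma Psi_Phi {s : ℕ} {x : Σ _ : ColPerm a n, ℕ →₀ ℕ} (hx : x ∈ D1 a n L s) :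
    Psi L s (Phi L x) = x := by
  obtain ⟨σ, l⟩ := x
  obtain ⟨h1, h2, h3⟩ := mem_D1 L |>.1 hx
  dsimp only at h1 h2 h3 ⊢
  set f : Fin n → Fin a × ℕ := Phi L ⟨σ, l⟩ with hf
  have hA : ∀ p : Fin n, f (σ.1 p) = (σ.2 p, dd L σ (p : ℕ) + ee n l (p : ℕ)) := by
    intro p
    simp [hf, Phi, Equiv.symm_apply_apply]
  set B : ℤ := ((n : ℤ) + 1) * (a : ℤ) with hB
  -- adjacent comparisons of the key along positions
  have hadj : ∀ (p : ℕ) (hp : p + 1 < n),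
      Kf L f (σ.1 ⟨p, by omega⟩) < Kf L f (σ.1 ⟨p + 1, hp⟩) := by
    intro p hp
    have hp0 : p < n := by omega
    have e1 := hA ⟨p, hp0⟩
    have e2 := hA ⟨p + 1, hp⟩
    have hKp : Kf L f (σ.1 ⟨p, hp0⟩) =
        ((dd L σ p + ee n l p : ℕ) : ℤ) * (2 * B) +
          rkL L (σ.2 ⟨p, hp0⟩, ((σ.1 ⟨p, hp0⟩ : ℕ) + 1)) := by
      rw [Kf_apply]; simp only [e1]; rw [hB]; ring
    have hKp1 : Kf L f (σ.1 ⟨p + 1, hp⟩) =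
        ((dd L σ (p + 1) + ee n l (p + 1) : ℕ) : ℤ) * (2 * B) +
          rkL L (σ.2 ⟨p + 1, hp⟩, ((σ.1 ⟨p + 1, hp⟩ : ℕ) + 1)) := by
      rw [Kf_apply]; simp only [e2]; rw [hB]; ring
    rw [hKp, hKp1]
    have hb1 := rkL_letter_bound L (σ.2 ⟨p, hp0⟩) ((σ.1 ⟨p, hp0⟩ : ℕ)) (σ.1 ⟨p, hp0⟩).isLt
    have hb2 := rkL_letter_bound L (σ.2 ⟨p + 1, hp⟩) ((σ.1 ⟨p + 1, hp⟩ : ℕ)) (σ.1 ⟨p + 1, hp⟩).isLt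
    rw [← hB] at hb1 hb2
    have w0 : wval σ (p + 1) = (σ.2 ⟨p, hp0⟩, ((σ.1 ⟨p, hp0⟩ : ℕ) + 1)) :=
      wval_pos σ ⟨p, hp0⟩
    have w1 : wval σ (p + 1 + 1) = (σ.2 ⟨p + 1, hp⟩, ((σ.1 ⟨p + 1, hp⟩ : ℕ) + 1)) :=
      wval_pos σ ⟨p + 1, hp⟩
    have hdch : (p + 1) ∈ DesL L σ ↔
        rkL L (σ.2 ⟨p + 1, hp⟩, ((σ.1 ⟨p + 1, hp⟩ : ℕ) + 1)) <
          rkL L (σ.2 ⟨p, hp0⟩, ((σ.1 ⟨p, hp0⟩ : ℕ) + 1)) := by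
      rw [mem_DesL, w0, w1]
      constructor
      · rintro ⟨_, h⟩; exact h
      · intro h; exact ⟨hp, h⟩
    have hds := dd_succ L σ p
    have hes := ee_succ (n := n) l p
    apply Kf_lt_arith ⟨hb1.1, hb1.2⟩ ⟨hb2.1, hb2.2⟩
    by_cases hd : (p + 1) ∈ DesL L σ
    · left
      rw [if_pos hd] at hds
      have : dd L σ p + ee n l p + 1 ≤ dd L σ (p + 1) + ee n l (p + 1) := by omega
      exact_mod_cast this
    · right
      constructor
      · rw [if_neg hd] at hds
        have : dd L σ p + ee n l p ≤ dd L σ (p + 1) + ee n l (p + 1) := by omega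
        exact_mod_cast this
      · rw [hdch] at hd
        push_neg at hd
        rcases lt_or_eq_of_le hd with h | h
        · exact h
        · exfalso
          have hkk := rkL_letter_inj L h
          have : σ.1 ⟨p, hp0⟩ = σ.1 ⟨p + 1, hp⟩ := Fin.ext hkk
          have := σ.1.injective this
          simp at this
  -- the key is strictly increasing along positions
  have hSM : ∀ i j : Fin n, i < j → Kf L f (σ.1 i) < Kf L f (σ.1 j) := by
    have H : ∀ (m : ℕ) (hm : m < n) (i : ℕ) (hi : i < m),
        Kf L f (σ.1 ⟨i, by omega⟩) < Kf L f (σ.1 ⟨m, hm⟩) := by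
      intro m
      induction m with
      | zero => intro hm i hi; omega
      | succ m ih =>
        intro hm i hi
        rcases Nat.lt_or_ge i m with h | h
        · exact lt_trans (ih (by omega) i h) (hadj m hm)
        · have : i = m := by omega
          subst this
          exact hadj i hm
    intro i j hij
    have := H (j : ℕ) j.isLt (i : ℕ) hij
    simpa using this
  have hsort : σ.1 = Tuple.sort (Kf L f) := by
    rw [Tuple.eq_sort_iff]
    constructor
    · intro i j hij
      rcases eq_or_lt_of_le hij with h | h
      · rw [h]
      · exact (hSM i j h).le
    · intro i j hij hEq
      exact absurd hEq (ne_of_lt (hSM i j hij))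
  have hσ : sigmaOf L f = σ := by
    have hc1 : (sigmaOf L f).1 = σ.1 := by rw [sigmaOf]; exact hsort.symm ▸ rfl
    have hc2 : (sigmaOf L f).2 = σ.2 := by
      funext p
      show (f (Tuple.sort (Kf L f) p)).1 = σ.2 p
      rw [← hsort, hA]
    exact Prod.ext hc1 hc2
  -- heights recovered
  have hhof : ∀ (p : ℕ) (hp : p < n), hOf L f p = dd L σ p + ee n l p := by
    intro p hp
    rw [hOf, dif_pos hp, ← hsort]
    rw [hA ⟨p, hp⟩]
  have hEf : ∀ (p : ℕ) (hp : p < n), Ef L f p = ee n l p := by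
    intro p hp
    unfold Ef
    rw [hhof p hp, hσ]
    omega
  have hlOf : lOf L s f = l := by
    ext j
    rw [lOf_apply, valsOf]
    rcases Nat.eq_zero_or_pos n with hn | hn
    · -- n = 0
      have hd0 : desL L σ = 0 := by unfold desL; rw [DesL_empty_of_n0 L σ hn]; simp
      split
      · rename_i hj0
        subst hj0
        have hh0 : hOf L f (n - 1) = 0 := by unfold hOf; rw [dif_neg (by omega)]
        have hr1 : ∑ j ∈ Finset.range (n + 1), l j = l 0 := by
          rw [hn, Finset.sum_range_one]
        rw [hh0]
        omega
      · rw [if_neg (by omega)]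
        symm
        rw [← Finsupp.notMem_support_iff]
        intro hmem
        have := h3 hmem
        rw [Finset.mem_range] at this
        omega
    · split
      · rename_i hj0
        subst hj0
        have hhn : hOf L f (n - 1) = dd L σ (n - 1) + ee n l (n - 1) :=
          hhof (n - 1) (by omega)
        have hdd : dd L σ (n - 1) = desL L σ := dd_eq_desL L σ (n - 1) (by omega)
        have hlast := ee_last (n := n) l hn
        omega
      · rename_i hj0
        by_cases hjn : j ≤ n
        · rw [if_pos hjn]
          have hEp1 : EpadOf L f (n - j + 1) = ee n l (n - j) := by
            rw [EpadOf_eq L f (n - j + 1) (by omega) (by omega)]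
            rw [show n - j + 1 - 1 = n - j by omega]
            exact hEf (n - j) (by omega)
          rcases Nat.lt_or_ge j n with hjlt | hjge
          · have hEp0 : EpadOf L f (n - j) = ee n l (n - j - 1) := by
              rw [EpadOf_eq L f (n - j) (by omega) (by omega)]
              rw [show n - j - 1 = n - j - 1 by omega]
              exact hEf (n - j - 1) (by omega)
            have hes := ee_succ (n := n) l (n - j - 1)
            rw [show n - j - 1 + 1 = n - j by omega, show n - (n - j) = j by omega] at hes
            rw [hEp1, hEp0]
            omega
          · have hjEq : j = n := by omega
            have hEp0 : EpadOf L f (n - j) = 0 := by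
              rw [show n - j = 0 by omega]
              unfold EpadOf
              rw [if_pos rfl]
            have h00 : ee n (⇑l) (n - j) = l n := by
              rw [show n - j = 0 by omega, ee_zero]
            rw [hEp1, hEp0, h00, hjEq]
            omega
        · rw [if_neg hjn]
          symm
          rw [← Finsupp.notMem_support_iff]
          intro hmem
          have := h3 hmem
          rw [Finset.mem_range] at this
          omega
  show (⟨sigmaOf L f, lOf L s f⟩ : Σ _ : ColPerm a n, ℕ →₀ ℕ) = ⟨σ, l⟩
  rw [hσ, hlOf]


lemma sum_bij_main (s : ℕ) :
    ∑ x ∈ D1 a n L s,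
        (X : Polynomial ℚ) ^ (rmajL L x.1 + ∑ j ∈ Finset.range (n + 1), j * x.2 j) =
      ∑ f ∈ D2 a n L s, (X : Polynomial ℚ) ^ (∑ k : Fin n, (f k).2) := by
  refine Finset.sum_nbij' (Phi L) (Psi L s) (fun x hx => Phi_mem L hx)
    (fun f hf => Psi_mem L hf) (fun x hx => Psi_Phi L hx) (fun f hf => Phi_Psi L hf)
    (fun x hx => ?_)
  rw [Phi_weight L hx]

end Carlitz

namespace Carlitz

lemma base_eq (a : ℕ) [NeZero a] (L : Finset (Fin a)) (s : ℕ) :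
    (a : Polynomial ℚ) * (∑ j ∈ Finset.range (s + 1), X ^ j) - (L.card : Polynomial ℚ) =
      ∑ x ∈ AllowedSet a L s, (X : Polynomial ℚ) ^ x.2 := by
  have hfull : ∑ x ∈ (Finset.univ : Finset (Fin a)) ×ˢ Finset.range (s + 1),
      (X : Polynomial ℚ) ^ x.2 =
        (a : Polynomial ℚ) * ∑ j ∈ Finset.range (s + 1), X ^ j := by
    rw [Finset.sum_product]
    have hc : ∀ x : Fin a, ∑ y ∈ Finset.range (s + 1), (X : Polynomial ℚ) ^ ((x, y).2) =
        ∑ j ∈ Finset.range (s + 1), (X : Polynomial ℚ) ^ j := fun x => rfl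
    rw [Finset.sum_congr rfl fun x _ => hc x, Finset.sum_const, Finset.card_univ,
      Fintype.card_fin, nsmul_eq_mul]
  have hsplit := Finset.sum_filter_add_sum_filter_not
    ((Finset.univ : Finset (Fin a)) ×ˢ Finset.range (s + 1))
    (fun x => ¬(x.1 ∈ L ∧ x.2 = 0)) (fun x => (X : Polynomial ℚ) ^ x.2)
  have hbadset : (((Finset.univ : Finset (Fin a)) ×ˢ Finset.range (s + 1)).filter
      fun x => ¬¬(x.1 ∈ L ∧ x.2 = 0)) = L ×ˢ {0} := by
    ext ⟨c, h⟩
    simp only [Finset.mem_filter, Finset.mem_product, Finset.mem_univ, Finset.mem_range,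
      true_and, not_not, Finset.mem_singleton]
    constructor
    · rintro ⟨_, h1, h2⟩; exact ⟨h1, h2⟩
    · rintro ⟨h1, h2⟩; exact ⟨by omega, h1, h2⟩
  have hbad : ∑ x ∈ (((Finset.univ : Finset (Fin a)) ×ˢ Finset.range (s + 1)).filter
      fun x => ¬¬(x.1 ∈ L ∧ x.2 = 0)), (X : Polynomial ℚ) ^ x.2 =
        (L.card : Polynomial ℚ) := by
    rw [hbadset, Finset.sum_product]
    simp
  rw [hfull, hbad] at hsplit
  have : ∑ x ∈ AllowedSet a L s, (X : Polynomial ℚ) ^ x.2 =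
      ∑ x ∈ (((Finset.univ : Finset (Fin a)) ×ˢ Finset.range (s + 1)).filter
        fun x => ¬(x.1 ∈ L ∧ x.2 = 0)), (X : Polynomial ℚ) ^ x.2 := rfl
  rw [this, sub_eq_iff_eq_add]
  exact hsplit.symm

lemma pow_expand (a : ℕ) [NeZero a] (L : Finset (Fin a)) (s n : ℕ) :
    ((a : Polynomial ℚ) * (∑ j ∈ Finset.range (s + 1), X ^ j) -
        (L.card : Polynomial ℚ)) ^ n =
      ∑ f ∈ D2 a n L s, (X : Polynomial ℚ) ^ (∑ k : Fin n, (f k).2) := by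
  rw [base_eq a L s, ← Fin.prod_const n (∑ x ∈ AllowedSet a L s, (X : Polynomial ℚ) ^ x.2),
    Finset.prod_univ_sum]
  exact Finset.sum_congr rfl fun f hf => Finset.prod_pow_eq_pow_sum _ _ _

noncomputable def invSer (n : ℕ) : PowerSeries (Polynomial ℚ) :=
  ∏ j ∈ Finset.range (n + 1), PowerSeries.mk fun k => (X : Polynomial ℚ) ^ (j * k)

lemma factor_mul_geom (j : ℕ) :
    (1 - PowerSeries.C (X ^ j : Polynomial ℚ) * PowerSeries.X) *
      PowerSeries.mk (fun k => (X : Polynomial ℚ) ^ (j * k)) = 1 := by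
  ext k
  rw [sub_mul, one_mul, map_sub]
  cases k with
  | zero =>
    rw [mul_assoc, PowerSeries.coeff_C_mul, PowerSeries.coeff_zero_X_mul, mul_zero, sub_zero,
      PowerSeries.coeff_mk, mul_zero, pow_zero, PowerSeries.coeff_one, if_pos rfl]
  | succ k =>
    rw [mul_assoc, PowerSeries.coeff_C_mul, PowerSeries.coeff_succ_X_mul,
      PowerSeries.coeff_mk, PowerSeries.coeff_mk, PowerSeries.coeff_one,
      if_neg (Nat.succ_ne_zero k), ← pow_add,
      show j + j * k = j * (k + 1) by ring, sub_self]

lemma prod_mul_invSer (n : ℕ) :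
    (∏ j ∈ Finset.range (n + 1),
        (1 - PowerSeries.C (X ^ j : Polynomial ℚ) * PowerSeries.X)) * invSer n = 1 := by
  rw [invSer, ← Finset.prod_mul_distrib]
  exact Finset.prod_eq_one fun j _ => factor_mul_geom j

lemma ring_inverse_eq (n : ℕ) :
    Ring.inverse (∏ j ∈ Finset.range (n + 1),
        (1 - PowerSeries.C (X ^ j : Polynomial ℚ) * PowerSeries.X)) = invSer n := by
  set P := ∏ j ∈ Finset.range (n + 1),
      (1 - PowerSeries.C (X ^ j : Polynomial ℚ) * PowerSeries.X) with hP
  have h : P * invSer n = 1 := prod_mul_invSer n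
  have hu : IsUnit P := IsUnit.of_mul_eq_one _ h
  calc Ring.inverse P = Ring.inverse P * (P * invSer n) := by rw [h, mul_one]
    _ = Ring.inverse P * P * invSer n := (mul_assoc _ _ _).symm
    _ = invSer n := by rw [Ring.inverse_mul_cancel _ hu, one_mul]

lemma coeff_invSer (n r : ℕ) :
    PowerSeries.coeff r (invSer n) =
      ∑ l ∈ Finset.finsuppAntidiag (Finset.range (n + 1)) r,
        (X : Polynomial ℚ) ^ (∑ j ∈ Finset.range (n + 1), j * l j) := by
  rw [invSer, PowerSeries.coeff_prod]
  refine Finset.sum_congr rfl fun l _ => ?_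
  rw [← Finset.prod_pow_eq_pow_sum]
  exact Finset.prod_congr rfl fun j _ => by rw [PowerSeries.coeff_mk]

lemma coeff_Amaj (a n : ℕ) [NeZero a] (L : Finset (Fin a)) (m : ℕ) :
    (Amaj a n L).coeff m =
      ∑ σ : ColPerm a n, if desL L σ = m then (X : Polynomial ℚ) ^ rmajL L σ else 0 := by
  rw [Amaj, Polynomial.finset_sum_coeff]
  refine Finset.sum_congr rfl fun σ _ => ?_
  rw [Polynomial.coeff_C_mul, Polynomial.coeff_X_pow]
  by_cases h : desL L σ = m
  · rw [if_pos h.symm, if_pos h, mul_one]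
  · rw [if_neg (fun hh => h hh.symm), if_neg h, mul_zero]

lemma key (a n : ℕ) [NeZero a] (L : Finset (Fin a)) :
    (Amaj a n L : PowerSeries (Polynomial ℚ)) * invSer n =
      PowerSeries.mk fun s =>
        ((a : Polynomial ℚ) * (∑ j ∈ Finset.range (s + 1), X ^ j) -
          (L.card : Polynomial ℚ)) ^ n := by
  ext s
  rw [PowerSeries.coeff_mk, PowerSeries.coeff_mul, pow_expand a L s n, ← sum_bij_main L s,
    Finset.Nat.sum_antidiagonal_eq_sum_range_succ_mk]
  have hstep : ∀ m ∈ Finset.range (s + 1),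
      (PowerSeries.coeff m (Amaj a n L : PowerSeries (Polynomial ℚ))) *
        PowerSeries.coeff (s - m) (invSer n) =
      ∑ σ : ColPerm a n, if desL L σ = m then
        (X : Polynomial ℚ) ^ rmajL L σ *
          PowerSeries.coeff (s - m) (invSer n) else 0 := by
    intro m _
    rw [Polynomial.coeff_coe, coeff_Amaj, Finset.sum_mul]
    exact Finset.sum_congr rfl fun σ _ => by rw [ite_mul, zero_mul]
  rw [Finset.sum_congr rfl hstep, Finset.sum_comm]
  have hinner : ∀ σ : ColPerm a n,
      (∑ m ∈ Finset.range (s + 1), if desL L σ = m then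
          (X : Polynomial ℚ) ^ rmajL L σ *
            PowerSeries.coeff (s - m) (invSer n) else 0) =
      if desL L σ ≤ s then
        ∑ l ∈ Finset.finsuppAntidiag (Finset.range (n + 1)) (s - desL L σ),
          (X : Polynomial ℚ) ^ (rmajL L σ + ∑ j ∈ Finset.range (n + 1), j * l j) else 0 := by
    intro σ
    rw [Finset.sum_ite_eq]
    by_cases h : desL L σ ≤ s
    · rw [if_pos (Finset.mem_range.2 (by omega)), if_pos h, coeff_invSer, Finset.mul_sum]
      exact Finset.sum_congr rfl fun l _ => by rw [← pow_add]
    · rw [if_neg (fun hh => h (by have := Finset.mem_range.1 hh; omega)), if_neg h]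
  rw [Finset.sum_congr rfl (fun σ _ => hinner σ)]
  have hD1 : ∑ x ∈ D1 a n L s,
      (X : Polynomial ℚ) ^ (rmajL L x.1 + ∑ j ∈ Finset.range (n + 1), j * x.2 j) =
      ∑ σ : ColPerm a n, if desL L σ ≤ s then
        ∑ l ∈ Finset.finsuppAntidiag (Finset.range (n + 1)) (s - desL L σ),
          (X : Polynomial ℚ) ^ (rmajL L σ + ∑ j ∈ Finset.range (n + 1), j * l j) else 0 := by
    rw [D1, Finset.sum_sigma, Finset.sum_filter]
  rw [hD1]

end Carlitz


end

/-- Generalized Carlitz identity (EGF form):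
`Σ_{n≥0} (uⁿ/n!) · A_{a,ℓ,n}(t,q)/(t;q)_{n+1} = Σ_{s≥0} t^s e^{u(a[s+1]_q − ℓ)}`,
as formal power series in `u` whose coefficients are formal power series in `t` over
`ℚ[q]`: the coefficient of `uⁿ` on the left is `(1/n!) A_{a,ℓ,n}(t,q)·(t;q)_{n+1}⁻¹`
(the Pochhammer factor is a unit, and `Ring.inverse` is its genuine inverse), and on
the right it is `(1/n!) Σ_{s≥0} t^s (a[s+1]_q − ℓ)ⁿ`. -/
theorem generalized_carlitz_identity (a : ℕ) [NeZero a] (L : Finset (Fin a)) :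
    (PowerSeries.mk (fun n =>
        (n.factorial : ℚ)⁻¹ •
          ((Amaj a n L : PowerSeries (Polynomial ℚ)) *
            Ring.inverse (∏ j ∈ Finset.range (n + 1),
              (1 - PowerSeries.C (X ^ j : Polynomial ℚ) * PowerSeries.X)))) :
      PowerSeries (PowerSeries (Polynomial ℚ))) =
    PowerSeries.mk (fun n =>
      (n.factorial : ℚ)⁻¹ •
        PowerSeries.mk (fun s =>
          ((a : Polynomial ℚ) * (∑ j ∈ Finset.range (s + 1), X ^ j) -
            (L.card : Polynomial ℚ)) ^ n)) := by
  ext n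
  rw [PowerSeries.coeff_mk, PowerSeries.coeff_mk, Carlitz.ring_inverse_eq n,
    Carlitz.key a n L]
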